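/- Let C = (Z_n, E) be the cycle with edges {v, v+1} (mod n), n ≥ 3, and let w ∈ Z_n and v_0, …, v_{k+1} ∈ Z_n \ {w} be distinct nodes such that the cyclic sequence ⟨w, v_0, …, v_{k+1}⟩ is true to C, where 0 ≤ k ≤ n−3. Then the glider inequality Σ_{i=0}^k x_{v_i v_{i+1}} − Σ_{i=1}^k x_{v_i w} ≤ 1 is valid for LMC(C): every characteristic vector of a multicut of K_n lifted from C satisfies it. -/

import Mathlib

open Finset

open scoped Classical

variable {V : Type*}

/-- A decomposition of a graph `G`: a partition of the node set all of whose blocks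
induce connected subgraphs. -/
def IsDecomposition (G : SimpleGraph V) (P : Set (Set V)) : Prop :=
  Setoid.IsPartition P ∧ ∀ U ∈ P, (G.induce U).Connected

/-- Two nodes lie in a common block of `P`. -/
def SameBlock (P : Set (Set V)) (u v : V) : Prop :=
  ∃ U ∈ P, u ∈ U ∧ v ∈ U

/-- The edge `e` straddles two distinct blocks of `P`. -/
def Crosses (P : Set (Set V)) (e : Sym2 V) : Prop :=
  ∃ u v, e = s(u, v) ∧ ¬ SameBlock P u v

/-- The multicut of `G` induced by a decomposition `P`. -/
def inducedMulticut (G : SimpleGraph V) (P : Set (Set V)) : Set (Sym2 V) :=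
  {e | e ∈ G.edgeSet ∧ Crosses P e}

/-- `M` is a multicut of `G`. -/
def IsMulticut (G : SimpleGraph V) (M : Set (Sym2 V)) : Prop :=
  ∃ P, IsDecomposition G P ∧ M = inducedMulticut G P

/-- The characteristic vector (in the ambient space `Sym2 V → ℝ`, with coordinates
outside the edge set of `H` pinned to `0`) of the multicut of `H` induced by `P`. -/
noncomputable def multicutVec (H : SimpleGraph V) (P : Set (Set V)) : Sym2 V → ℝ :=
  fun e => if e ∈ H.edgeSet ∧ Crosses P e then 1 else 0

/-- Characteristic vectors of multicuts of `H` lifted from `G`. -/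
def liftedVectors (G H : SimpleGraph V) : Set (Sym2 V → ℝ) :=
  {x | ∃ P, IsDecomposition G P ∧ x = multicutVec H P}

/-- The lifted multicut polytope with respect to `G` and `H`. -/
def LMC (G H : SimpleGraph V) : Set (Sym2 V → ℝ) :=
  convexHull ℝ (liftedVectors G H)

/-- The inequality `f x ≤ b` is valid for `P` and its equality set has affine dimension
`|E ∪ F| - 1`, i.e. one less than the dimension of the corresponding lifted multicut
polytope for the augmented graph `H`. -/
def DefinesFacet (H : SimpleGraph V) (P : Set (Sym2 V → ℝ))
    (f : (Sym2 V → ℝ) → ℝ) (b : ℝ) : Prop :=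
  (∀ x ∈ P, f x ≤ b) ∧
  Module.finrank ℝ (affineSpan ℝ {x | x ∈ P ∧ f x = b}).direction + 1 = Nat.card H.edgeSet

/-- The cycle on `Z_n` (for `n ≥ 3`): `a` is adjacent to `a + 1`. -/
def cycleGraph (n : ℕ) : SimpleGraph (ZMod n) :=
  SimpleGraph.fromRel (fun a b => b = a + 1)

lemma zmod_sub_one_val {n : ℕ} (hn : 3 ≤ n) (x : ZMod n) (hx : x ≠ 0) :
    (x - 1).val + 1 = x.val := by
  haveI : NeZero n := ⟨by omega⟩
  have hv : x.val ≠ 0 := fun h => hx (by rwa [ZMod.val_eq_zero] at h)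
  have hlt : x.val < n := ZMod.val_lt x
  have hx1 : x - 1 = ((x.val - 1 : ℕ) : ZMod n) := by
    have h2 : ((x.val : ℕ) : ZMod n) = x := by rw [ZMod.natCast_val, ZMod.cast_id]
    rw [Nat.cast_sub (by omega), h2, Nat.cast_one]
  rw [hx1, ZMod.val_cast_of_lt (by omega)]
  omega

lemma zmod_val_inj {n : ℕ} (hn : 3 ≤ n) {x y : ZMod n} (h : x.val = y.val) : x = y := by
  haveI : NeZero n := ⟨by omega⟩
  have hx : ((x.val : ℕ) : ZMod n) = x := by rw [ZMod.natCast_val, ZMod.cast_id]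
  have hy : ((y.val : ℕ) : ZMod n) = y := by rw [ZMod.natCast_val, ZMod.cast_id]
  rw [← hx, ← hy, h]

lemma arc_lemma {n : ℕ} (hn : 3 ≤ n) {B : Set (ZMod n)} :
    ∀ {a b : B} (_ : ((cycleGraph n).induce B).Walk a b),
    (∀ t : ZMod n, (t - (a : ZMod n)).val ≤ ((b : ZMod n) - (a : ZMod n)).val → t ∈ B) ∨
    (∀ t : ZMod n, ((b : ZMod n) - (a : ZMod n)).val ≤ (t - (a : ZMod n)).val → t ∈ B) := by
  haveI : NeZero n := ⟨by omega⟩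
  intro a b W
  induction W with
  | @nil a =>
    left
    intro t ht
    rw [sub_self, ZMod.val_zero] at ht
    have h0 : t - (a : ZMod n) = 0 := by
      rw [← ZMod.val_eq_zero]; omega
    have : t = (a : ZMod n) := by linear_combination h0
    rw [this]; exact a.2
  | @cons a c b h W ih =>
    have hadj : (cycleGraph n).Adj (a : ZMod n) (c : ZMod n) := h
    rw [cycleGraph, SimpleGraph.fromRel_adj] at hadj
    obtain ⟨hne, hca | hac⟩ := hadj.imp id id
    · -- c = a + 1
      rcases ih with ihF | ihB
      · -- forward from c ⇒ forward from a
        left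
        intro t ht
        by_cases hta : t = (a : ZMod n)
        · rw [hta]; exact a.2
        · have hba : (b : ZMod n) - (a : ZMod n) ≠ 0 := by
            intro h0
            have : ((b : ZMod n) - (a : ZMod n)).val = 0 := by rw [h0, ZMod.val_zero]
            have hta' : (t - (a : ZMod n)).val = 0 := by omega
            have : t - (a : ZMod n) = 0 := by rwa [ZMod.val_eq_zero] at hta'
            exact hta (by linear_combination this)
          have htne : t - (a : ZMod n) ≠ 0 := fun h0 => hta (by linear_combination h0)
          have e1 : (t - (a : ZMod n) - 1).val + 1 = (t - (a : ZMod n)).val :=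
            zmod_sub_one_val hn _ htne
          have e2 : ((b : ZMod n) - (a : ZMod n) - 1).val + 1 = ((b : ZMod n) - (a : ZMod n)).val :=
            zmod_sub_one_val hn _ hba
          have r1 : t - (c : ZMod n) = t - (a : ZMod n) - 1 := by rw [hca]; ring
          have r2 : (b : ZMod n) - (c : ZMod n) = (b : ZMod n) - (a : ZMod n) - 1 := by
            rw [hca]; ring
          exact ihF t (by rw [r1, r2]; omega)
      · -- backward from c
        by_cases hba : (b : ZMod n) = (a : ZMod n)
        · left
          intro t ht
          have h0 : ((b : ZMod n) - (a : ZMod n)).val = 0 := by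
            rw [hba, sub_self, ZMod.val_zero]
          have : t - (a : ZMod n) = 0 := by
            rw [← ZMod.val_eq_zero]; omega
          have : t = (a : ZMod n) := by linear_combination this
          rw [this]; exact a.2
        · right
          intro t ht
          have hbne : (b : ZMod n) - (a : ZMod n) ≠ 0 := fun h0 => hba (by linear_combination h0)
          have e2 : ((b : ZMod n) - (a : ZMod n) - 1).val + 1 = ((b : ZMod n) - (a : ZMod n)).val :=
            zmod_sub_one_val hn _ hbne
          have htne : t - (a : ZMod n) ≠ 0 := by
            intro h0
            have : (t - (a : ZMod n)).val = 0 := by rw [h0, ZMod.val_zero]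
            have : ((b : ZMod n) - (a : ZMod n)).val = 0 := by omega
            exact hbne (by rwa [ZMod.val_eq_zero] at this)
          have e1 : (t - (a : ZMod n) - 1).val + 1 = (t - (a : ZMod n)).val :=
            zmod_sub_one_val hn _ htne
          have r1 : t - (c : ZMod n) = t - (a : ZMod n) - 1 := by rw [hca]; ring
          have r2 : (b : ZMod n) - (c : ZMod n) = (b : ZMod n) - (a : ZMod n) - 1 := by
            rw [hca]; ring
          exact ihB t (by rw [r1, r2]; omega)
    · -- a = c + 1
      by_cases hbc : (b : ZMod n) = (c : ZMod n)
      · right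
        intro t ht
        have hr : (b : ZMod n) - (a : ZMod n) = -1 := by rw [hbc, hac]; ring
        have hv1 : ((b : ZMod n) - (a : ZMod n)).val = n - 1 := by
          have hcast : ((n - 1 : ℕ) : ZMod n) = -1 := by
            rw [Nat.cast_sub (by omega), ZMod.natCast_self, Nat.cast_one]; ring
          rw [hr, ← hcast, ZMod.val_cast_of_lt (by omega)]
        have htlt : (t - (a : ZMod n)).val < n := ZMod.val_lt _
        have : (t - (a : ZMod n)).val = ((b : ZMod n) - (a : ZMod n)).val := by omega
        have := zmod_val_inj hn this
        have : t = (b : ZMod n) := by linear_combination this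
        rw [this, hbc]; exact c.2
      · rcases ih with ihF | ihB
        · -- forward from c ⇒ forward from a
          left
          intro t ht
          by_cases htc : t = (c : ZMod n)
          · rw [htc]; exact c.2
          · have htne : t - (c : ZMod n) ≠ 0 := fun h0 => htc (by linear_combination h0)
            have hbne : (b : ZMod n) - (c : ZMod n) ≠ 0 := fun h0 => hbc (by linear_combination h0)
            have e1 : (t - (c : ZMod n) - 1).val + 1 = (t - (c : ZMod n)).val :=
              zmod_sub_one_val hn _ htne
            have e2 : ((b : ZMod n) - (c : ZMod n) - 1).val + 1 = ((b : ZMod n) - (c : ZMod n)).val :=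
              zmod_sub_one_val hn _ hbne
            have r1 : t - (a : ZMod n) = t - (c : ZMod n) - 1 := by rw [hac]; ring
            have r2 : (b : ZMod n) - (a : ZMod n) = (b : ZMod n) - (c : ZMod n) - 1 := by
              rw [hac]; ring
            refine ihF t ?_
            rw [r1, r2] at ht
            omega
        · -- backward from c ⇒ backward from a
          right
          intro t ht
          by_cases htc : t = (c : ZMod n)
          · rw [htc]; exact c.2
          · have htne : t - (c : ZMod n) ≠ 0 := fun h0 => htc (by linear_combination h0)
            have hbne : (b : ZMod n) - (c : ZMod n) ≠ 0 := fun h0 => hbc (by linear_combination h0)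
            have e1 : (t - (c : ZMod n) - 1).val + 1 = (t - (c : ZMod n)).val :=
              zmod_sub_one_val hn _ htne
            have e2 : ((b : ZMod n) - (c : ZMod n) - 1).val + 1 = ((b : ZMod n) - (c : ZMod n)).val :=
              zmod_sub_one_val hn _ hbne
            have r1 : t - (a : ZMod n) = t - (c : ZMod n) - 1 := by rw [hac]; ring
            have r2 : (b : ZMod n) - (a : ZMod n) = (b : ZMod n) - (c : ZMod n) - 1 := by
              rw [hac]; ring
            refine ihB t ?_
            rw [r1, r2] at ht
            omega


lemma crosses_iff_not_sameBlock {V : Type*} (P : Set (Set V)) (u v : V) :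
    Crosses P s(u, v) ↔ ¬ SameBlock P u v := by
  constructor
  · rintro ⟨u', v', he, hns⟩
    rw [Sym2.eq_iff] at he
    rcases he with ⟨rfl, rfl⟩ | ⟨rfl, rfl⟩
    · exact hns
    · rintro ⟨U, hU, h1, h2⟩
      exact hns ⟨U, hU, h2, h1⟩
  · exact fun h => ⟨u, v, rfl, h⟩

/-- validity of the glider inequality for the lifted multicut polytope of
the cycle `C` on `Z_n`: for distinct nodes `w, v_0, …, v_{k+1}` whose cyclic sequence
`⟨w, v_0, …, v_{k+1}⟩` is true to `C` (encoded by strictly increasing cyclic distances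
from `w`), every characteristic vector `x` of a multicut of `K_n` lifted from `C`
satisfies `∑_{i=0}^k x_{v_i v_{i+1}} - ∑_{i=1}^k x_{v_i w} ≤ 1`. -/
theorem glider_inequality_valid
    (n k : ℕ) (hn : 3 ≤ n) (hk : k ≤ n - 3)
    (w : ZMod n) (v : ℕ → ZMod n)
    (hdist : ∀ i j : ℕ, i ≤ k + 1 → j ≤ k + 1 → v i = v j → i = j)
    (hwv : ∀ i ≤ k + 1, v i ≠ w)
    (htrue : ∀ i ≤ k, (v i - w).val < (v (i + 1) - w).val)
    (x : Sym2 (ZMod n) → ℝ) (hx : x ∈ liftedVectors (cycleGraph n) ⊤) :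
    ∑ i ∈ Finset.range (k + 1), x s(v i, v (i + 1))
      - ∑ i ∈ Finset.Icc 1 k, x s(v i, w) ≤ 1 := by
  classical
  haveI : NeZero n := ⟨by omega⟩
  obtain ⟨P, ⟨hpart, hconn⟩, rfl⟩ := hx
  obtain ⟨B, ⟨hBP, hwB⟩, huniq⟩ := hpart.2 w
  have memB : ∀ u : ZMod n, SameBlock P u w ↔ u ∈ B := by
    intro u
    constructor
    · rintro ⟨U, hU, huU, hwU⟩
      rwa [huniq U ⟨hU, hwU⟩] at huU
    · intro hu; exact ⟨B, hBP, hu, hwB⟩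
  have sameB : ∀ u u' : ZMod n, u ∈ B → u' ∈ B → SameBlock P u u' :=
    fun u u' hu hu' => ⟨B, hBP, hu, hu'⟩
  have hvec : ∀ u u' : ZMod n, u ≠ u' →
      multicutVec (⊤ : SimpleGraph (ZMod n)) P s(u, u')
        = if ¬ SameBlock P u u' then 1 else 0 := by
    intro u u' huu
    by_cases h : SameBlock P u u' <;>
      simp [multicutVec, crosses_iff_not_sameBlock, h, huu, SimpleGraph.mem_edgeSet]
  have hmono : ∀ i j : ℕ, i ≤ j → j ≤ k + 1 → (v i - w).val ≤ (v j - w).val := by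
    intro i j hij
    induction j, hij using Nat.le_induction with
    | base => intro _; exact le_rfl
    | succ m hm ih =>
      intro hmk
      exact le_trans (ih (by omega)) (le_of_lt (htrue m (by omega)))
  have dich : ∀ u : ZMod n, u ∈ B →
      (∀ t : ZMod n, (t - w).val ≤ (u - w).val → t ∈ B) ∨
      (∀ t : ZMod n, (u - w).val ≤ (t - w).val → t ∈ B) := by
    intro u hu
    have hc := (hconn B hBP).preconnected ⟨w, hwB⟩ ⟨u, hu⟩
    exact hc.elim fun W => arc_lemma hn W
  obtain ⟨s, hs_not, hsQ⟩ : ∃ s : ℕ,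
      (∀ i < s, ¬ (i ≤ k + 1 ∧ ∀ t : ZMod n, (v i - w).val ≤ (t - w).val → t ∈ B)) ∧
      (s ≤ k + 1 → (s ≤ k + 1 ∧ ∀ t : ZMod n, (v s - w).val ≤ (t - w).val → t ∈ B)) := by
    by_cases hex : ∃ i, i ≤ k + 1 ∧ ∀ t : ZMod n, (v i - w).val ≤ (t - w).val → t ∈ B
    · exact ⟨Nat.find hex, fun i hi => Nat.find_min hex hi, fun _ => Nat.find_spec hex⟩
    · exact ⟨k + 2, fun i _ h => hex ⟨i, h⟩, by omega⟩
  set N := (Finset.range (k + 1)).filter (fun i => SameBlock P (v i) (v (i + 1))) with hN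
  set A := (Finset.range (k + 1)).filter (fun i => ¬ SameBlock P (v i) (v (i + 1))) with hA
  set Sw := (Finset.Icc 1 k).filter (fun i => SameBlock P (v i) w) with hSw
  set M := (Finset.Icc 1 k).filter (fun i => ¬ SameBlock P (v i) w) with hM
  have hs1 : ∑ i ∈ Finset.range (k + 1),
      multicutVec (⊤ : SimpleGraph (ZMod n)) P s(v i, v (i + 1)) = (A.card : ℝ) := by
    rw [hA, ← Finset.sum_boole]
    refine Finset.sum_congr rfl fun i hi => ?_
    rw [Finset.mem_range] at hi
    exact hvec _ _ (fun he => by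
      have := hdist i (i + 1) (by omega) (by omega) he; omega)
  have hs2 : ∑ i ∈ Finset.Icc 1 k,
      multicutVec (⊤ : SimpleGraph (ZMod n)) P s(v i, w) = (M.card : ℝ) := by
    rw [hM, ← Finset.sum_boole]
    refine Finset.sum_congr rfl fun i hi => ?_
    rw [Finset.mem_Icc] at hi
    exact hvec _ _ (hwv i (by omega))
  have hAN : N.card + A.card = k + 1 := by
    rw [hN, hA, Finset.card_filter_add_card_filter_not, Finset.card_range]
  have hSwM : Sw.card + M.card = k := by
    rw [hSw, hM, Finset.card_filter_add_card_filter_not, Nat.card_Icc]; omega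
  have hkey : Sw.card ≤ N.card := by
    apply Finset.card_le_card_of_injOn (fun i => if i < s then i - 1 else i)
    · intro i hi
      rw [hSw, Finset.mem_coe, Finset.mem_filter, Finset.mem_Icc] at hi
      obtain ⟨⟨hi1, hik⟩, hsame⟩ := hi
      have hviB : v i ∈ B := (memB _).1 hsame
      by_cases hlt : i < s
      · have hL : ∀ t : ZMod n, (t - w).val ≤ (v i - w).val → t ∈ B := by
          rcases dich (v i) hviB with h | h
          · exact h
          · exact absurd ⟨by omega, h⟩ (hs_not i hlt)
        have hprev : v (i - 1) ∈ B := hL _ (hmono (i - 1) i (by omega) (by omega))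
        simp only [if_pos hlt]
        rw [hN, Finset.mem_coe, Finset.mem_filter, Finset.mem_range]
        refine ⟨by omega, ?_⟩
        have hi1' : i - 1 + 1 = i := by omega
        rw [hi1']
        exact sameB _ _ hprev hviB
      · obtain ⟨-, hQs⟩ := hsQ (by omega)
        have hnext : v (i + 1) ∈ B := hQs _ (hmono s (i + 1) (by omega) (by omega))
        simp only [if_neg hlt]
        rw [hN, Finset.mem_coe, Finset.mem_filter, Finset.mem_range]
        exact ⟨by omega, sameB _ _ hviB hnext⟩
    · intro i hi j hj hf
      have hi' := Finset.mem_Icc.1 (Finset.filter_subset _ _ (Finset.mem_coe.1 hi))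
      have hj' := Finset.mem_Icc.1 (Finset.filter_subset _ _ (Finset.mem_coe.1 hj))
      simp only at hf
      split_ifs at hf <;> omega
  rw [hs1, hs2]
  have hfin : A.card ≤ M.card + 1 := by omega
  have : (A.card : ℝ) ≤ (M.card : ℝ) + 1 := by exact_mod_cast hfin
  linarith
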